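/- The complex unital *-algebra Z generated by elements z and z* subject to the relation z* z = q² z z* + (1 - q²), with 0 < q < 1, has as a linear basis the set {z^k (z*)^l : k, l ∈ ℤ≥0}. -/

import Mathlib

noncomputable section

open scoped BigOperators

/-- The `q`-shifted factorial `(a;q)_k`. -/
def qPoch (a q : ℝ) (k : ℕ) : ℝ := ∏ j ∈ Finset.range k, (1 - a * q ^ j)

inductive ZGen | z | zs

/-- The single defining relation `z* z = q² z z* + (1 - q²)`. -/
inductive ZRel (q : ℝ) : FreeAlgebra ℂ ZGen → FreeAlgebra ℂ ZGen → Prop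
  | rel : ZRel q (FreeAlgebra.ι ℂ ZGen.zs * FreeAlgebra.ι ℂ ZGen.z)
      (((q : ℂ) ^ 2) • (FreeAlgebra.ι ℂ ZGen.z * FreeAlgebra.ι ℂ ZGen.zs) +
        ((1 : ℂ) - (q : ℂ) ^ 2) • 1)

/-- The universal complex unital algebra with generators `z`, `z*` and the relation
`z* z = q² z z* + (1 - q²)`. -/
abbrev ZAlg (q : ℝ) := RingQuot (ZRel q)

def zZ (q : ℝ) : ZAlg q := RingQuot.mkAlgHom ℂ (ZRel q) (FreeAlgebra.ι ℂ ZGen.z)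
def zsZ (q : ℝ) : ZAlg q := RingQuot.mkAlgHom ℂ (ZRel q) (FreeAlgebra.ι ℂ ZGen.zs)

namespace ZAlgAux

abbrev VV := (ℕ × ℕ) →₀ ℂ

def Zop : Module.End ℂ VV := Finsupp.lmapDomain ℂ ℂ (fun p => (p.1 + 1, p.2))

def Svec (q : ℝ) (p : ℕ × ℕ) : VV :=
  ((q : ℂ)) ^ (2 * p.1) • Finsupp.single (p.1, p.2 + 1) 1 +
    (1 - (q : ℂ) ^ (2 * p.1)) • Finsupp.single (p.1 - 1, p.2) 1

def Sop (q : ℝ) : Module.End ℂ VV :=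
  Finsupp.lsum ℂ fun p => LinearMap.toSpanSingleton ℂ VV (Svec q p)

lemma Zop_single (p : ℕ × ℕ) (c : ℂ) :
    Zop (Finsupp.single p c) = Finsupp.single (p.1 + 1, p.2) c := by
  simp [Zop, Finsupp.mapDomain_single]

lemma Sop_single (q : ℝ) (p : ℕ × ℕ) (c : ℂ) :
    Sop q (Finsupp.single p c) = c • Svec q p := by
  simp [Sop, LinearMap.toSpanSingleton_apply]

lemma rel_holds (q : ℝ) :
    Sop q * Zop = ((q:ℂ)^2) • (Zop * Sop q) + ((1:ℂ) - (q:ℂ)^2) • 1 := by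
  apply Finsupp.lhom_ext
  rintro ⟨k, l⟩ c
  simp only [Module.End.mul_apply, LinearMap.add_apply, LinearMap.smul_apply,
    Module.End.one_apply, Zop_single, Sop_single, Svec, smul_add, smul_smul,
    Finsupp.smul_single, map_add, map_smul, smul_eq_mul, mul_one]
  cases k with
  | zero =>
    ext p
    simp only [Finsupp.add_apply, Finsupp.single_apply]
    norm_num
    split_ifs <;> ring
  | succ k =>
    ext p
    simp only [Finsupp.add_apply, Finsupp.single_apply]
    norm_num
    split_ifs <;> ring

def fgen (q : ℝ) : ZGen → Module.End ℂ VV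
  | .z => Zop
  | .zs => Sop q

def rep (q : ℝ) : ZAlg q →ₐ[ℂ] Module.End ℂ VV :=
  RingQuot.liftAlgHom ℂ ⟨FreeAlgebra.lift ℂ (fgen q), by
    rintro x y ⟨⟩
    simp only [map_mul, map_add, map_smul, map_one, FreeAlgebra.lift_ι_apply, fgen]
    exact rel_holds q⟩

lemma rep_z (q : ℝ) : rep q (zZ q) = Zop := by
  simp [rep, zZ, RingQuot.liftAlgHom_mkAlgHom_apply, fgen]

lemma rep_zs (q : ℝ) : rep q (zsZ q) = Sop q := by
  simp [rep, zsZ, RingQuot.liftAlgHom_mkAlgHom_apply, fgen]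

lemma Sop_pow (q : ℝ) (l m : ℕ) :
    ((Sop q) ^ l) (Finsupp.single (0, m) 1) = Finsupp.single (0, m + l) 1 := by
  induction l generalizing m with
  | zero => simp
  | succ l ih =>
    rw [pow_succ, Module.End.mul_apply, Sop_single]
    simp only [Svec, pow_zero]  -- q^(2*0)=1 needs mul_zero
    norm_num
    rw [ih]
    congr 2
    omega

lemma Zop_pow (k a b : ℕ) :
    (Zop ^ k) (Finsupp.single (a, b) 1) = Finsupp.single (a + k, b) 1 := by
  induction k generalizing a with
  | zero => simp
  | succ k ih =>
    rw [pow_succ, Module.End.mul_apply, Zop_single]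
    rw [show ((a,b).1 + 1, (a,b).2) = ((a+1 : ℕ), b) from rfl, ih]
    congr 2
    omega

lemma hcomm (q : ℝ) :
    zsZ q * zZ q = ((q:ℂ)^2) • (zZ q * zsZ q) + ((1:ℂ) - (q:ℂ)^2) • 1 := by
  have := RingQuot.mkAlgHom_rel ℂ (ZRel.rel (q := q))
  simpa only [map_mul, map_add, map_smul, map_one, zZ, zsZ] using this

end ZAlgAux

open ZAlgAux in
theorem stmt0 (q : ℝ) (hq0 : 0 < q) (hq1 : q < 1) :
    ∃ b : Module.Basis (ℕ × ℕ) ℂ (ZAlg q), ∀ k l : ℕ, b (k, l) = zZ q ^ k * zsZ q ^ l := by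
  set v : ℕ × ℕ → ZAlg q := fun p => zZ q ^ p.1 * zsZ q ^ p.2 with hv
  -- linear independence
  have hLv : ∀ p : ℕ × ℕ, (rep q (v p)) (Finsupp.single (0,0) 1) = Finsupp.single p 1 := by
    rintro ⟨k, l⟩
    simp only [hv, map_mul, map_pow, rep_z, rep_zs, Module.End.mul_apply]
    rw [Sop_pow, Zop_pow]
    norm_num
  have hli : LinearIndependent ℂ v := by
    have hindep : LinearIndependent ℂ (fun p : ℕ × ℕ => (Finsupp.single p 1 : VV)) := by
      simpa using (Finsupp.basisSingleOne (R := ℂ) (ι := ℕ × ℕ)).linearIndependent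
    apply LinearIndependent.of_comp
      ((LinearMap.applyₗ (Finsupp.single (0,0) 1 : VV)).comp (rep q).toLinearMap)
    convert hindep using 1
    funext p
    simpa using hLv p
    rfl
  -- spanning
  set M : Submodule ℂ (ZAlg q) := Submodule.span ℂ (Set.range v) with hM
  have hvM : ∀ p, v p ∈ M := fun p => Submodule.subset_span ⟨p, rfl⟩
  have hz : ∀ x ∈ M, zZ q * x ∈ M := by
    intro x hx
    have : M.map (LinearMap.mulLeft ℂ (zZ q)) ≤ M := by
      rw [hM, Submodule.map_span, Submodule.span_le]
      rintro _ ⟨_, ⟨p, rfl⟩, rfl⟩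
      have : zZ q * v p = v (p.1 + 1, p.2) := by
        simp only [hv]; simp only [pow_succ', mul_assoc]
      simpa [this] using hvM (p.1 + 1, p.2)
    exact this ⟨x, hx, rfl⟩
  have key : ∀ k l : ℕ, zsZ q * (zZ q ^ k * zsZ q ^ l) ∈ M := by
    intro k
    induction k with
    | zero =>
      intro l
      have : zsZ q * (zZ q ^ 0 * zsZ q ^ l) = v (0, l + 1) := by
        simp only [hv]; simp only [pow_succ', pow_zero, one_mul]
      rw [this]; exact hvM _
    | succ k ih =>
      intro l
      have expand : zsZ q * (zZ q ^ (k+1) * zsZ q ^ l)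
          = ((q:ℂ)^2) • (zZ q * (zsZ q * (zZ q ^ k * zsZ q ^ l)))
            + ((1:ℂ) - (q:ℂ)^2) • (zZ q ^ k * zsZ q ^ l) := by
        rw [pow_succ']
        calc zsZ q * (zZ q * zZ q ^ k * zsZ q ^ l)
            = (zsZ q * zZ q) * (zZ q ^ k * zsZ q ^ l) := by
              simp only [mul_assoc]
          _ = _ := by
              rw [hcomm q, add_mul, smul_mul_assoc, smul_mul_assoc, one_mul, mul_assoc]
      rw [expand]
      exact M.add_mem (M.smul_mem _ (hz _ (ih l))) (M.smul_mem _ (hvM (k, l)))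
  have hzs : ∀ x ∈ M, zsZ q * x ∈ M := by
    intro x hx
    have : M.map (LinearMap.mulLeft ℂ (zsZ q)) ≤ M := by
      rw [hM, Submodule.map_span, Submodule.span_le]
      rintro _ ⟨_, ⟨p, rfl⟩, rfl⟩
      exact key p.1 p.2
    exact this ⟨x, hx, rfl⟩
  -- the stabilizer subalgebra
  set N : Subalgebra ℂ (ZAlg q) :=
    { carrier := {a | ∀ x ∈ M, a * x ∈ M}
      mul_mem' := fun {a b} ha hb x hx => by rw [mul_assoc]; exact ha _ (hb _ hx)
      one_mem' := fun x hx => by rwa [one_mul]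
      add_mem' := fun {a b} ha hb x hx => by rw [add_mul]; exact M.add_mem (ha _ hx) (hb _ hx)
      zero_mem' := fun x hx => by rw [zero_mul]; exact M.zero_mem
      algebraMap_mem' := fun r x hx => by
        rw [Algebra.algebraMap_eq_smul_one, smul_mul_assoc, one_mul]
        exact M.smul_mem _ hx } with hN
  have hgen : Algebra.adjoin ℂ ({zZ q, zsZ q} : Set (ZAlg q)) = ⊤ := by
    rw [eq_top_iff]
    intro a _
    obtain ⟨x, rfl⟩ := RingQuot.mkAlgHom_surjective ℂ (ZRel q) a
    have hx : x ∈ Algebra.adjoin ℂ (Set.range (FreeAlgebra.ι ℂ (X := ZGen))) := by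
      rw [FreeAlgebra.adjoin_range_ι]; trivial
    have := Algebra.adjoin_mono (R := ℂ)
      (show (RingQuot.mkAlgHom ℂ (ZRel q)) '' Set.range (FreeAlgebra.ι ℂ (X := ZGen))
          ⊆ {zZ q, zsZ q} by
        rintro _ ⟨_, ⟨g, rfl⟩, rfl⟩
        cases g
        · exact Or.inl rfl
        · exact Or.inr rfl)
    have hmem : (RingQuot.mkAlgHom ℂ (ZRel q)) x ∈
        (Algebra.adjoin ℂ (Set.range (FreeAlgebra.ι ℂ (X := ZGen)))).map
          (RingQuot.mkAlgHom ℂ (ZRel q)) := ⟨x, hx, rfl⟩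
    rw [AlgHom.map_adjoin] at hmem
    exact this hmem
  have hNtop : N = ⊤ := by
    rw [eq_top_iff, ← hgen]
    apply Algebra.adjoin_le
    rintro a (rfl | rfl)
    · exact hz
    · exact hzs
  have hspan : ⊤ ≤ M := by
    intro a _
    have haN : a ∈ N := by rw [hNtop]; trivial
    have h1 : v (0, 0) = 1 := by simp [hv]
    have := haN 1 (h1 ▸ hvM (0, 0))
    rwa [mul_one] at this
  exact ⟨Module.Basis.mk hli hspan, fun k l => by rw [Module.Basis.mk_apply]⟩
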